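/- arXiv:1311.6876 — 2 statements merged into one kernel-verified Lean document; each statement's English description precedes it below -/
import Mathlib

section
/- Let X_q, X_a, M̃, y_q, y_a, η ≥ 0, λ > 0 be as above, let L be the joint square-loss objective, and let B be the block matrix with blocks B₁₁ = (η+1)X_qᵀX_q + λI, B₁₂ = −η X_qᵀ M̃ X_a, B₂₁ = −η X_aᵀ M̃ᵀ X_q, B₂₂ = X_aᵀX_a + η X_aᵀ M̃ᵀ M̃ X_a + λI. Then a pair (β_q, β_a) is a critical point of L (both partial gradients vanish) if and only if B·(β_q; β_a) = (X_qᵀ y_q; X_aᵀ y_a), where (u; v) denotes the stacked column vector. -/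
open Matrix Asymptotics Filter Topology

section aux
variable {F : Type*} [NormedAddCommGroup F] [InnerProductSpace ℝ F] [CompleteSpace F]
  {f g : F → ℝ} {f' g' x : F}

lemma HGA.add (hf : HasGradientAt f f' x) (hg : HasGradientAt g g' x) :
    HasGradientAt (fun y => f y + g y) (f' + g') x := by
  rw [hasGradientAt_iff_hasFDerivAt] at *
  rw [map_add]; exact hf.add hg

lemma HGA.cmul (c : ℝ) (hf : HasGradientAt f f' x) :
    HasGradientAt (fun y => c * f y) (c • f') x := by
  rw [hasGradientAt_iff_hasFDerivAt] at *
  simpa using hf.const_mul c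

lemma HGA.const (c : ℝ) (x : F) : HasGradientAt (fun _ => c) (0 : F) x := by
  rw [hasGradientAt_iff_hasFDerivAt]
  simpa using hasFDerivAt_const c x
end aux

noncomputable def qgrad {n m : ℕ} (A : Matrix (Fin n) (Fin m) ℝ) (c : Fin n → ℝ)
    (x : EuclideanSpace ℝ (Fin m)) : EuclideanSpace ℝ (Fin m) :=
  WithLp.toLp 2 ((2 : ℝ) • (Aᵀ.mulVec (A.mulVec x - c)))

lemma quad_grad {n m : ℕ} (A : Matrix (Fin n) (Fin m) ℝ) (c : Fin n → ℝ)
    (x : EuclideanSpace ℝ (Fin m)) :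
    HasGradientAt (fun b : EuclideanSpace ℝ (Fin m) => ∑ i, (A.mulVec b i - c i) ^ 2)
      (qgrad A c x) x := by
  rw [hasGradientAt_iff_isLittleO_nhds_zero]
  have hre : ∀ h : EuclideanSpace ℝ (Fin m),
      (∑ i, (A.mulVec (x + h) i - c i) ^ 2) - (∑ i, (A.mulVec x i - c i) ^ 2)
        - (inner ℝ (qgrad A c x) h : ℝ)
      = ∑ i, (A.mulVec h i) ^ 2 := by
    intro h
    have hq : ∀ j, qgrad A c x j = ∑ i, 2 * (A.mulVec x i - c i) * A i j := by
      intro j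
      simp [qgrad, Matrix.mulVec, dotProduct, Matrix.transpose_apply, Finset.mul_sum,
        mul_comm, mul_assoc, mul_left_comm]
    have hinner : (inner ℝ (qgrad A c x) h : ℝ)
        = ∑ i, 2 * (A.mulVec x i - c i) * A.mulVec h i := by
      simp only [PiLp.inner_apply, RCLike.inner_apply, conj_trivial, hq, Finset.mul_sum]
      rw [Finset.sum_comm]
      refine Finset.sum_congr rfl fun i _ => ?_
      simp only [Matrix.mulVec, dotProduct, Finset.mul_sum]
      refine Finset.sum_congr rfl fun j _ => by ring
    rw [hinner]
    have hadd : ∀ i, A.mulVec (x + h) i = A.mulVec x i + A.mulVec h i := fun i => by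
      have := Matrix.mulVec_add A (x : Fin m → ℝ) h
      exact congrFun this i
    simp only [hadd]
    rw [← Finset.sum_sub_distrib, ← Finset.sum_sub_distrib]
    exact Finset.sum_congr rfl fun i _ => by ring
  set T : EuclideanSpace ℝ (Fin m) →L[ℝ] EuclideanSpace ℝ (Fin n) :=
    LinearMap.toContinuousLinearMap (Matrix.toEuclideanLin A) with hT
  have hTh : ∀ h : EuclideanSpace ℝ (Fin m), ∑ i, (A.mulVec h i) ^ 2 = ‖T h‖ ^ 2 := by
    intro h
    have : ‖T h‖ ^ 2 = ∑ i, (T h i) ^ 2 := by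
      rw [EuclideanSpace.norm_eq, Real.sq_sqrt (by positivity)]
      simp [sq_abs]
    rw [this]
    refine Finset.sum_congr rfl fun i _ => ?_
    rfl
  have hbig : (fun h : EuclideanSpace ℝ (Fin m) => ∑ i, (A.mulVec h i) ^ 2)
      =O[𝓝 0] fun h => ‖h‖ ^ 2 := by
    refine isBigO_of_le' (c := ‖T‖ ^ 2) _ fun h => ?_
    rw [hTh h]
    have h1 : ‖T h‖ ≤ ‖T‖ * ‖h‖ := T.le_opNorm h
    have : ‖T h‖ ^ 2 ≤ (‖T‖ * ‖h‖) ^ 2 := pow_le_pow_left₀ (norm_nonneg _) h1 2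
    calc ‖‖T h‖ ^ 2‖ = ‖T h‖ ^ 2 := by rw [Real.norm_of_nonneg (by positivity)]
      _ ≤ (‖T‖ * ‖h‖) ^ 2 := this
      _ = ‖T‖ ^ 2 * ‖(‖h‖ ^ 2)‖ := by rw [Real.norm_of_nonneg (by positivity)]; ring
  have hlit : (fun h : EuclideanSpace ℝ (Fin m) => ∑ i, (A.mulVec h i) ^ 2)
      =o[𝓝 0] fun h => h :=
    hbig.trans_isLittleO (isLittleO_norm_pow_id one_lt_two)
  exact hlit.congr' (Eventually.of_forall fun h => (hre h).symm) (EventuallyEq.refl _ _)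

lemma sq_grad {m : ℕ} (x : EuclideanSpace ℝ (Fin m)) :
    HasGradientAt (fun b : EuclideanSpace ℝ (Fin m) => ∑ i, (b i) ^ 2) ((2 : ℝ) • x) x := by
  have h := quad_grad (1 : Matrix (Fin m) (Fin m) ℝ) 0 x
  have hf : (fun b : EuclideanSpace ℝ (Fin m) =>
      ∑ i, ((1 : Matrix (Fin m) (Fin m) ℝ).mulVec b i - (0 : Fin m → ℝ) i) ^ 2)
      = fun b : EuclideanSpace ℝ (Fin m) => ∑ i, (b i) ^ 2 := by
    funext b; simp [Matrix.one_mulVec]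
  have hg : qgrad (1 : Matrix (Fin m) (Fin m) ℝ) 0 x = (2 : ℝ) • x := by
    simp [qgrad, Matrix.one_mulVec]
  rw [hf, hg] at h; exact h

lemma sum_elim_eq_iff {p r : ℕ} {α : Type*} (u w : Fin p → α) (v z : Fin r → α) :
    Sum.elim u v = Sum.elim w z ↔ u = w ∧ v = z := by
  constructor
  · intro h
    exact ⟨funext fun i => congrFun h (Sum.inl i), funext fun j => congrFun h (Sum.inr j)⟩
  · rintro ⟨rfl, rfl⟩; rfl

/-- A pair `(βq, βa)` is a critical point of the joint square-loss objective `L`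
(both partial gradients vanish) if and only if `B ⬝ (βq; βa) = (Xqᵀ yq; Xaᵀ ya)`,
where `B` is the block matrix with blocks `B₁₁ = (η+1)XqᵀXq + λI`,
`B₁₂ = -η Xqᵀ M̃ Xa`, `B₂₁ = -η Xaᵀ M̃ᵀ Xq`, `B₂₂ = XaᵀXa + η Xaᵀ M̃ᵀ M̃ Xa + λI`. -/
theorem cops_critical_point_iff_linear_system (nq na p r : ℕ)
    (Xq : Matrix (Fin nq) (Fin p) ℝ) (Xa : Matrix (Fin na) (Fin r) ℝ)
    (M : Matrix (Fin nq) (Fin na) ℝ) (yq : Fin nq → ℝ) (ya : Fin na → ℝ)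
    (η lam : ℝ) (hη : 0 ≤ η) (hlam : 0 < lam) :
    let L : EuclideanSpace ℝ (Fin p) → EuclideanSpace ℝ (Fin r) → ℝ := fun βq βa =>
      ∑ i, (Xq.mulVec βq i - yq i) ^ 2 + ∑ j, (Xa.mulVec βa j - ya j) ^ 2 +
        η * ∑ i, (Xq.mulVec βq i - M.mulVec (Xa.mulVec βa) i) ^ 2 +
        lam * (∑ i, (βq i) ^ 2 + ∑ j, (βa j) ^ 2)
    let B : Matrix (Fin p ⊕ Fin r) (Fin p ⊕ Fin r) ℝ := Matrix.fromBlocks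
      ((η + 1) • (Xqᵀ * Xq) + lam • (1 : Matrix (Fin p) (Fin p) ℝ))
      ((-η) • (Xqᵀ * M * Xa))
      ((-η) • (Xaᵀ * Mᵀ * Xq))
      (Xaᵀ * Xa + η • (Xaᵀ * Mᵀ * M * Xa) + lam • (1 : Matrix (Fin r) (Fin r) ℝ))
    ∀ (βq : EuclideanSpace ℝ (Fin p)) (βa : EuclideanSpace ℝ (Fin r)),
      (HasGradientAt (fun b => L b βa) (0 : EuclideanSpace ℝ (Fin p)) βq ∧
        HasGradientAt (fun b => L βq b) (0 : EuclideanSpace ℝ (Fin r)) βa) ↔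
      B.mulVec (Sum.elim βq βa) = Sum.elim (Xqᵀ.mulVec yq) (Xaᵀ.mulVec ya) := by
  intro L B βq βa
  -- gradient in βq
  have hGq : HasGradientAt (fun b => L b βa)
      ((qgrad Xq yq βq + 0 + η • qgrad Xq (M.mulVec (Xa.mulVec βa)) βq)
        + lam • ((2 : ℝ) • βq + 0) : EuclideanSpace ℝ (Fin p)) βq := by
    exact HGA.add
      (HGA.add (HGA.add (quad_grad Xq yq βq) (HGA.const _ βq))
        (HGA.cmul η (quad_grad Xq (M.mulVec (Xa.mulVec βa)) βq)))
      (HGA.cmul lam (HGA.add (sq_grad βq) (HGA.const _ βq)))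
  -- gradient in βa
  have hfa : (fun b : EuclideanSpace ℝ (Fin r) =>
        ∑ i, (Xq.mulVec βq i - M.mulVec (Xa.mulVec b) i) ^ 2)
      = fun b : EuclideanSpace ℝ (Fin r) =>
        ∑ i, ((M * Xa).mulVec b i - Xq.mulVec βq i) ^ 2 := by
    funext b
    refine Finset.sum_congr rfl fun i _ => ?_
    rw [← Matrix.mulVec_mulVec]
    ring
  have hGa : HasGradientAt (fun b => L βq b)
      ((0 + qgrad Xa ya βa + η • qgrad (M * Xa) (Xq.mulVec βq) βa)
        + lam • ((0 : EuclideanSpace ℝ (Fin r)) + (2 : ℝ) • βa) : EuclideanSpace ℝ (Fin r)) βa := by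
    refine HGA.add
      (HGA.add (HGA.add (HGA.const _ βa) (quad_grad Xa ya βa))
        (HGA.cmul η ?_))
      (HGA.cmul lam (HGA.add (HGA.const _ βa) (sq_grad βa)))
    rw [hfa]
    exact quad_grad (M * Xa) (Xq.mulVec βq) βa
  -- identify the gradients with the linear system residuals
  have hq : (qgrad Xq yq βq + 0 + η • qgrad Xq (M.mulVec (Xa.mulVec βa)) βq)
        + lam • ((2 : ℝ) • βq + 0)
      = (2 : ℝ) • ((((η + 1) • (Xqᵀ * Xq) + lam • (1 : Matrix (Fin p) (Fin p) ℝ)).mulVec βq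
          + (((-η) • (Xqᵀ * M * Xa)).mulVec βa)) - Xqᵀ.mulVec yq) := by
    simp only [qgrad, Matrix.mulVec_sub, Matrix.mulVec_mulVec, Matrix.add_mulVec,
      Matrix.smul_mulVec, Matrix.one_mulVec, add_zero, zero_add, Matrix.mul_assoc, WithLp.ofLp_toLp]
    module
  have ha : (0 + qgrad Xa ya βa + η • qgrad (M * Xa) (Xq.mulVec βq) βa)
        + lam • ((0 : EuclideanSpace ℝ (Fin r)) + (2 : ℝ) • βa)
      = (2 : ℝ) • (((((-η) • (Xaᵀ * Mᵀ * Xq)).mulVec βq)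
          + ((Xaᵀ * Xa + η • (Xaᵀ * Mᵀ * M * Xa)
              + lam • (1 : Matrix (Fin r) (Fin r) ℝ)).mulVec βa)) - Xaᵀ.mulVec ya) := by
    simp only [qgrad, Matrix.mulVec_sub, Matrix.mulVec_mulVec, Matrix.add_mulVec,
      Matrix.smul_mulVec, Matrix.one_mulVec, Matrix.transpose_mul, add_zero, zero_add,
      Matrix.mul_assoc, WithLp.ofLp_toLp, WithLp.ofLp_zero]
    module
  have hB : B = Matrix.fromBlocks
      ((η + 1) • (Xqᵀ * Xq) + lam • (1 : Matrix (Fin p) (Fin p) ℝ))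
      ((-η) • (Xqᵀ * M * Xa))
      ((-η) • (Xaᵀ * Mᵀ * Xq))
      (Xaᵀ * Xa + η • (Xaᵀ * Mᵀ * M * Xa) + lam • (1 : Matrix (Fin r) (Fin r) ℝ)) := rfl
  have hsplit : B.mulVec (Sum.elim βq βa) = Sum.elim
      ((((η + 1) • (Xqᵀ * Xq) + lam • (1 : Matrix (Fin p) (Fin p) ℝ)).mulVec βq)
        + (((-η) • (Xqᵀ * M * Xa)).mulVec βa))
      ((((-η) • (Xaᵀ * Mᵀ * Xq)).mulVec βq)
        + ((Xaᵀ * Xa + η • (Xaᵀ * Mᵀ * M * Xa)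
            + lam • (1 : Matrix (Fin r) (Fin r) ℝ)).mulVec βa)) := by
    rw [hB, Matrix.fromBlocks_mulVec]
    simp only [Sum.elim_comp_inl, Sum.elim_comp_inr]
  rw [hsplit, sum_elim_eq_iff]
  constructor
  · rintro ⟨h1, h2⟩
    have e1 := hGq.unique h1
    have e2 := hGa.unique h2
    replace e1 : _ = (0 : Fin p → ℝ) := hq.symm.trans (congrArg WithLp.ofLp e1)
    replace e2 : _ = (0 : Fin r → ℝ) := ha.symm.trans (congrArg WithLp.ofLp e2)
    constructor
    · have := (smul_eq_zero.mp e1).resolve_left (by norm_num)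
      exact sub_eq_zero.mp this
    · have := (smul_eq_zero.mp e2).resolve_left (by norm_num)
      exact sub_eq_zero.mp this
  · rintro ⟨e1, e2⟩
    constructor
    · have : ((qgrad Xq yq βq + 0 + η • qgrad Xq (M.mulVec (Xa.mulVec βa)) βq)
          + lam • ((2 : ℝ) • βq + 0) : EuclideanSpace ℝ (Fin p)) = 0 := by
        apply WithLp.ofLp_injective; refine hq.trans ?_; rw [e1]; simp
      rwa [this] at hGq
    · have : ((0 + qgrad Xa ya βa + η • qgrad (M * Xa) (Xq.mulVec βq) βa)
          + lam • ((0 : EuclideanSpace ℝ (Fin r)) + (2 : ℝ) • βa) : EuclideanSpace ℝ (Fin r)) = 0 := by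
        apply WithLp.ofLp_injective; refine ha.trans ?_; rw [e2]; simp
      rwa [this] at hGa
end

section
/- Let X_q, X_a, M̃, y_q, y_a, η ≥ 0, λ > 0 be as above, let L be the joint square-loss objective, and let B be the block matrix with blocks B₁₁ = (η+1)X_qᵀX_q + λI, B₁₂ = −η X_qᵀ M̃ X_a, B₂₁ = −η X_aᵀ M̃ᵀ X_q, B₂₂ = X_aᵀX_a + η X_aᵀ M̃ᵀ M̃ X_a + λI. Then the stacked vector (β_q*; β_a*) = B⁻¹ (X_qᵀ y_q; X_aᵀ y_a) is the unique global minimizer of L over ℝᵖ × ℝʳ. -/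
open Matrix

private lemma dp_self_nonneg {n : Type*} [Fintype n] (v : n → ℝ) : 0 ≤ v ⬝ᵥ v :=
  Finset.sum_nonneg fun i _ => mul_self_nonneg (v i)

private lemma dpT {m n : Type*} [Fintype m] [Fintype n] (A : Matrix m n ℝ)
    (v : n → ℝ) (w : m → ℝ) : v ⬝ᵥ Aᵀ *ᵥ w = (A *ᵥ v) ⬝ᵥ w := by
  rw [dotProduct_mulVec, vecMul_transpose]

private lemma sq_sum_eq {n : Type*} [Fintype n] (f g : n → ℝ) :
    ∑ i, (f i - g i) ^ 2 = (f - g) ⬝ᵥ (f - g) := by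
  simp [dotProduct, pow_two]

private lemma sq_sum_eq' {n : Type*} [Fintype n] (f : n → ℝ) :
    ∑ i, (f i) ^ 2 = f ⬝ᵥ f := by
  simp [dotProduct, pow_two]

private lemma quadform {nq na p r : ℕ}
    (Xq : Matrix (Fin nq) (Fin p) ℝ) (Xa : Matrix (Fin na) (Fin r) ℝ)
    (M : Matrix (Fin nq) (Fin na) ℝ) (η lam : ℝ)
    (v : Fin p ⊕ Fin r → ℝ) :
    v ⬝ᵥ (Matrix.fromBlocks
      ((η + 1) • (Xqᵀ * Xq) + lam • (1 : Matrix (Fin p) (Fin p) ℝ))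
      ((-η) • (Xqᵀ * M * Xa))
      ((-η) • (Xaᵀ * Mᵀ * Xq))
      (Xaᵀ * Xa + η • (Xaᵀ * Mᵀ * M * Xa) + lam • (1 : Matrix (Fin r) (Fin r) ℝ))) *ᵥ v =
      (Xq *ᵥ (v ∘ Sum.inl)) ⬝ᵥ (Xq *ᵥ (v ∘ Sum.inl)) +
      (Xa *ᵥ (v ∘ Sum.inr)) ⬝ᵥ (Xa *ᵥ (v ∘ Sum.inr)) +
      η * ((Xq *ᵥ (v ∘ Sum.inl) - M *ᵥ (Xa *ᵥ (v ∘ Sum.inr))) ⬝ᵥ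
           (Xq *ᵥ (v ∘ Sum.inl) - M *ᵥ (Xa *ᵥ (v ∘ Sum.inr)))) +
      lam * ((v ∘ Sum.inl) ⬝ᵥ (v ∘ Sum.inl) + (v ∘ Sum.inr) ⬝ᵥ (v ∘ Sum.inr)) := by
  set vq := v ∘ Sum.inl with hvq
  set va := v ∘ Sum.inr with hva
  have hv : v = vq ⊕ᵥ va := (Sum.elim_comp_inl_inr v).symm
  rw [hv]
  rw [fromBlocks_mulVec, sumElim_dotProduct_sumElim]
  simp only [Sum.elim_comp_inl, Sum.elim_comp_inr]
  simp only [add_mulVec, smul_mulVec, one_mulVec, dotProduct_add, dotProduct_smul,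
    ← mulVec_mulVec, dpT, smul_eq_mul, dotProduct_sub, sub_dotProduct]
  rw [dotProduct_comm (M *ᵥ Xa *ᵥ va) (Xq *ᵥ vq)]
  ring

private lemma Lexpand {nq na p r : ℕ}
    (Xq : Matrix (Fin nq) (Fin p) ℝ) (Xa : Matrix (Fin na) (Fin r) ℝ)
    (M : Matrix (Fin nq) (Fin na) ℝ) (yq : Fin nq → ℝ) (ya : Fin na → ℝ)
    (η lam : ℝ) (βq : Fin p → ℝ) (βa : Fin r → ℝ) :
    ∑ i, (Xq.mulVec βq i - yq i) ^ 2 + ∑ j, (Xa.mulVec βa j - ya j) ^ 2 +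
        η * ∑ i, (Xq.mulVec βq i - M.mulVec (Xa.mulVec βa) i) ^ 2 +
        lam * (∑ i, (βq i) ^ 2 + ∑ j, (βa j) ^ 2) =
      (βq ⊕ᵥ βa) ⬝ᵥ (Matrix.fromBlocks
        ((η + 1) • (Xqᵀ * Xq) + lam • (1 : Matrix (Fin p) (Fin p) ℝ))
        ((-η) • (Xqᵀ * M * Xa))
        ((-η) • (Xaᵀ * Mᵀ * Xq))
        (Xaᵀ * Xa + η • (Xaᵀ * Mᵀ * M * Xa) + lam • (1 : Matrix (Fin r) (Fin r) ℝ)))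
        *ᵥ (βq ⊕ᵥ βa) -
      2 * ((Xqᵀ *ᵥ yq ⊕ᵥ Xaᵀ *ᵥ ya) ⬝ᵥ (βq ⊕ᵥ βa)) + (yq ⬝ᵥ yq + ya ⬝ᵥ ya) := by
  rw [quadform, sumElim_dotProduct_sumElim]
  simp only [Sum.elim_comp_inl, Sum.elim_comp_inr, sq_sum_eq, sq_sum_eq']
  rw [dotProduct_comm (Xqᵀ *ᵥ yq) βq, dotProduct_comm (Xaᵀ *ᵥ ya) βa, dpT, dpT]
  simp only [dotProduct_sub, sub_dotProduct]
  rw [dotProduct_comm yq (Xq *ᵥ βq), dotProduct_comm ya (Xa *ᵥ βa)]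
  ring

/-- The stacked vector `(βq*; βa*) = B⁻¹ (Xqᵀ yq; Xaᵀ ya)` is the unique global minimizer
of the joint square-loss objective `L` over `ℝᵖ × ℝʳ`, where `B` is the block matrix with
blocks `B₁₁ = (η+1)XqᵀXq + λI`, `B₁₂ = -η Xqᵀ M̃ Xa`, `B₂₁ = -η Xaᵀ M̃ᵀ Xq`,
`B₂₂ = XaᵀXa + η Xaᵀ M̃ᵀ M̃ Xa + λI`. -/
theorem cops_closed_form_unique_global_minimizer (nq na p r : ℕ)
    (Xq : Matrix (Fin nq) (Fin p) ℝ) (Xa : Matrix (Fin na) (Fin r) ℝ)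
    (M : Matrix (Fin nq) (Fin na) ℝ) (yq : Fin nq → ℝ) (ya : Fin na → ℝ)
    (η lam : ℝ) (hη : 0 ≤ η) (hlam : 0 < lam) :
    let L : (Fin p → ℝ) → (Fin r → ℝ) → ℝ := fun βq βa =>
      ∑ i, (Xq.mulVec βq i - yq i) ^ 2 + ∑ j, (Xa.mulVec βa j - ya j) ^ 2 +
        η * ∑ i, (Xq.mulVec βq i - M.mulVec (Xa.mulVec βa) i) ^ 2 +
        lam * (∑ i, (βq i) ^ 2 + ∑ j, (βa j) ^ 2)
    let B : Matrix (Fin p ⊕ Fin r) (Fin p ⊕ Fin r) ℝ := Matrix.fromBlocks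
      ((η + 1) • (Xqᵀ * Xq) + lam • (1 : Matrix (Fin p) (Fin p) ℝ))
      ((-η) • (Xqᵀ * M * Xa))
      ((-η) • (Xaᵀ * Mᵀ * Xq))
      (Xaᵀ * Xa + η • (Xaᵀ * Mᵀ * M * Xa) + lam • (1 : Matrix (Fin r) (Fin r) ℝ))
    let βstar : Fin p ⊕ Fin r → ℝ := B⁻¹.mulVec (Sum.elim (Xqᵀ.mulVec yq) (Xaᵀ.mulVec ya))
    ∀ (βq : Fin p → ℝ) (βa : Fin r → ℝ),
      L (βstar ∘ Sum.inl) (βstar ∘ Sum.inr) ≤ L βq βa ∧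
        (L βq βa = L (βstar ∘ Sum.inl) (βstar ∘ Sum.inr) →
          βq = βstar ∘ Sum.inl ∧ βa = βstar ∘ Sum.inr) := by
  intro L B βstar
  -- quadratic form is positive on nonzero vectors
  have hquadpos : ∀ v : Fin p ⊕ Fin r → ℝ, v ≠ 0 → 0 < v ⬝ᵥ B *ᵥ v := by
    intro v hv
    rw [show v ⬝ᵥ B *ᵥ v = _ from quadform Xq Xa M η lam v]
    have h1 := dp_self_nonneg (Xq *ᵥ (v ∘ Sum.inl))
    have h2 := dp_self_nonneg (Xa *ᵥ (v ∘ Sum.inr))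
    have h3 := dp_self_nonneg (Xq *ᵥ (v ∘ Sum.inl) - M *ᵥ (Xa *ᵥ (v ∘ Sum.inr)))
    have h4 : 0 < (v ∘ Sum.inl) ⬝ᵥ (v ∘ Sum.inl) + (v ∘ Sum.inr) ⬝ᵥ (v ∘ Sum.inr) := by
      rcases lt_or_eq_of_le (add_nonneg (dp_self_nonneg (v ∘ Sum.inl))
        (dp_self_nonneg (v ∘ Sum.inr))) with h | h
      · exact h
      · exfalso
        have hl : (v ∘ Sum.inl) ⬝ᵥ (v ∘ Sum.inl) = 0 := by
          have := dp_self_nonneg (v ∘ Sum.inl)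
          have := dp_self_nonneg (v ∘ Sum.inr)
          linarith
        have hr : (v ∘ Sum.inr) ⬝ᵥ (v ∘ Sum.inr) = 0 := by
          have := dp_self_nonneg (v ∘ Sum.inl)
          have := dp_self_nonneg (v ∘ Sum.inr)
          linarith
        rw [dotProduct_self_eq_zero] at hl hr
        apply hv
        funext x
        cases x with
        | inl i => exact congrFun hl i
        | inr j => exact congrFun hr j
    nlinarith [mul_nonneg hη h3, mul_pos hlam h4]
  -- B is symmetric
  have hBt : Bᵀ = B := by
    show (Matrix.fromBlocks _ _ _ _)ᵀ = _
    rw [fromBlocks_transpose]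
    simp only [B]
    congr 1 <;>
      simp [transpose_add, transpose_smul, transpose_mul, Matrix.mul_assoc]
  -- B is positive definite
  have hpd : B.PosDef := by
    refine PosDef.of_dotProduct_mulVec_pos ?_ ?_
    · ext i j
      simp only [Matrix.conjTranspose_apply, star_trivial]
      exact congrFun (congrFun hBt i) j
    · intro x hx
      simpa using hquadpos x hx
  -- B * B⁻¹ = 1
  have hBinv : B * B⁻¹ = 1 :=
    mul_nonsing_inv B ((Matrix.isUnit_iff_isUnit_det B).1 hpd.isUnit)
  set c : Fin p ⊕ Fin r → ℝ := Sum.elim (Xqᵀ.mulVec yq) (Xaᵀ.mulVec ya) with hc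
  have hBβ : B *ᵥ βstar = c := by
    show B *ᵥ (B⁻¹ *ᵥ c) = c
    rw [mulVec_mulVec, hBinv, one_mulVec]
  -- symmetric dot product identities
  have hsymdp : ∀ w : Fin p ⊕ Fin r → ℝ, βstar ⬝ᵥ B *ᵥ w = c ⬝ᵥ w := by
    intro w
    conv_lhs => rw [← hBt]
    rw [dpT, hBβ]
  intro βq βa
  set v : Fin p ⊕ Fin r → ℝ := βq ⊕ᵥ βa with hvdef
  set δ : Fin p ⊕ Fin r → ℝ := v - βstar with hδ
  -- key identity: L βq βa = L βstar + δ ⬝ᵥ B δ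
  have hstar : βstar ∘ Sum.inl ⊕ᵥ βstar ∘ Sum.inr = βstar := Sum.elim_comp_inl_inr βstar
  have hL1 : L βq βa = v ⬝ᵥ B *ᵥ v - 2 * (c ⬝ᵥ v) + (yq ⬝ᵥ yq + ya ⬝ᵥ ya) :=
    Lexpand Xq Xa M yq ya η lam βq βa
  have hL2 : L (βstar ∘ Sum.inl) (βstar ∘ Sum.inr) =
      βstar ⬝ᵥ B *ᵥ βstar - 2 * (c ⬝ᵥ βstar) + (yq ⬝ᵥ yq + ya ⬝ᵥ ya) := by
    have := Lexpand Xq Xa M yq ya η lam (βstar ∘ Sum.inl) (βstar ∘ Sum.inr)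
    rw [hstar] at this
    exact this
  have hvBstar : v ⬝ᵥ B *ᵥ βstar = c ⬝ᵥ v := by
    rw [hBβ, dotProduct_comm]
  have hkey : L βq βa = L (βstar ∘ Sum.inl) (βstar ∘ Sum.inr) + δ ⬝ᵥ B *ᵥ δ := by
    have hexp : δ ⬝ᵥ B *ᵥ δ =
        v ⬝ᵥ B *ᵥ v - v ⬝ᵥ B *ᵥ βstar - βstar ⬝ᵥ B *ᵥ v + βstar ⬝ᵥ B *ᵥ βstar := by
      rw [hδ, mulVec_sub]
      simp only [dotProduct_sub, sub_dotProduct]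
      ring
    have h1 := hsymdp v
    have h2 := hsymdp βstar
    rw [hL1, hL2, hexp, hvBstar, h1, h2]
    ring
  have hδnn : 0 ≤ δ ⬝ᵥ B *ᵥ δ := by
    rcases eq_or_ne δ 0 with h | h
    · simp [h]
    · exact le_of_lt (hquadpos δ h)
  constructor
  · linarith [hkey, hδnn]
  · intro heq
    have hδ0 : δ = 0 := by
      by_contra h
      have := hquadpos δ h
      linarith [hkey]
    have hδf : v = βstar := by
      have := sub_eq_zero.mp hδ0
      exact this
    constructor
    · funext i
      exact congrFun hδf (Sum.inl i)
    · funext j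
      exact congrFun hδf (Sum.inr j)
end
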